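/- arXiv:2003.06018 — 2 statements merged into one kernel-verified Lean document; each statement's English description precedes it below -/
import Mathlib

section
/- Let d ∈ ℝ^n be strictly positive and let B₀ ∈ ℝ^{n×n} satisfy: columns of B₀ sum to zero, off-diagonal entries of B₀ are nonpositive, and B₀ d = 0. Then for every x₀ ∈ ℝ^n and every t ≥ 0, exp(−t B₀) x₀ ≺_d x₀. -/
open Matrix Finset

def ColStoch {n : ℕ} (A : Matrix (Fin n) (Fin n) ℝ) : Prop :=
  (∀ i j, 0 ≤ A i j) ∧ ∀ j, ∑ i, A i j = 1

def dMaj {n : ℕ} (d x y : Fin n → ℝ) : Prop :=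
  ∃ A : Matrix (Fin n) (Fin n) ℝ, ColStoch A ∧ A.mulVec d = d ∧ A.mulVec y = x

open NormedSpace

/-- The exponential series of a matrix, as a `HasSum`. -/
lemma exp_hasSum_aux {n : ℕ} (M : Matrix (Fin n) (Fin n) ℝ) :
    HasSum (fun k : ℕ => ((k.factorial : ℝ))⁻¹ • M ^ k) (exp M) := by
  letI : SeminormedRing (Matrix (Fin n) (Fin n) ℝ) := Matrix.linftyOpSemiNormedRing
  letI : NormedRing (Matrix (Fin n) (Fin n) ℝ) := Matrix.linftyOpNormedRing
  letI : NormedAlgebra ℝ (Matrix (Fin n) (Fin n) ℝ) := Matrix.linftyOpNormedAlgebra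
  have hs : Summable (fun k : ℕ => ((k.factorial : ℝ))⁻¹ • M ^ k) :=
    expSeries_summable' (𝕂 := ℝ) M
  have := hs.hasSum
  rwa [show ∑' k : ℕ, ((k.factorial : ℝ))⁻¹ • M ^ k = exp M by
    rw [exp_eq_tsum ℝ]] at this

/-- Entry evaluation as a continuous additive monoid hom target. -/
lemma exp_entry_hasSum {n : ℕ} (M : Matrix (Fin n) (Fin n) ℝ) (i j : Fin n) :
    HasSum (fun k : ℕ => ((k.factorial : ℝ))⁻¹ • (M ^ k) i j) (exp M i j) := by
  have h := exp_hasSum_aux M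
  have hc : Continuous (fun A : Matrix (Fin n) (Fin n) ℝ => A i j) :=
    (continuous_apply j).comp (continuous_apply i)
  have := h.map (G := Matrix (Fin n) (Fin n) ℝ →+ ℝ)
    ⟨⟨fun A => A i j, rfl⟩, fun _ _ => rfl⟩ hc
  simpa [Matrix.smul_apply, smul_eq_mul] using
    (show HasSum (fun k : ℕ => (((k.factorial : ℝ))⁻¹ • M ^ k) i j) (exp M i j) from this)

lemma exp_mulVec_hasSum {n : ℕ} (M : Matrix (Fin n) (Fin n) ℝ) (v : Fin n → ℝ) :
    HasSum (fun k : ℕ => ((k.factorial : ℝ))⁻¹ • (M ^ k).mulVec v)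
      ((exp M).mulVec v) := by
  have h := exp_hasSum_aux M
  have hc : Continuous (fun A : Matrix (Fin n) (Fin n) ℝ => A.mulVec v) := by
    apply continuous_pi
    intro i
    simp only [Matrix.mulVec, dotProduct]
    exact continuous_finset_sum _ fun j _ =>
      Continuous.mul (f := fun a : Matrix (Fin n) (Fin n) ℝ => a i j)
        (((continuous_apply j).comp (continuous_apply i))) continuous_const
  have := h.map (G := Matrix (Fin n) (Fin n) ℝ →+ (Fin n → ℝ))
    ⟨⟨fun A => A.mulVec v, Matrix.zero_mulVec v⟩, fun A B => Matrix.add_mulVec A B v⟩ hc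
  simpa [Function.comp_def, Matrix.smul_mulVec] using this

/-- If `M *ᵥ v = 0`, then `exp M *ᵥ v = v`. -/
lemma exp_mulVec_fixed {n : ℕ} (M : Matrix (Fin n) (Fin n) ℝ) (v : Fin n → ℝ)
    (h : M.mulVec v = 0) : (exp M).mulVec v = v := by
  have h1 := exp_mulVec_hasSum M v
  have hz : ∀ k : ℕ, ((k.factorial : ℝ))⁻¹ • (M ^ k).mulVec v
      = if k = 0 then v else 0 := by
    intro k
    cases k with
    | zero => simp [Matrix.one_mulVec]
    | succ m =>
      have : (M ^ (m + 1)).mulVec v = 0 := by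
        rw [pow_succ, ← Matrix.mulVec_mulVec, h, Matrix.mulVec_zero]
      simp [this]
  have h2 : HasSum (fun k : ℕ => ((k.factorial : ℝ))⁻¹ • (M ^ k).mulVec v) v := by
    rw [funext hz]
    exact hasSum_ite_eq 0 v
  exact h1.unique h2

/-- If all entries of `M` are nonnegative, so are all entries of `exp M`. -/
lemma exp_entries_nonneg {n : ℕ} (M : Matrix (Fin n) (Fin n) ℝ)
    (h : ∀ i j, 0 ≤ M i j) (i j : Fin n) : 0 ≤ exp M i j := by
  have hp : ∀ (k : ℕ) (i j : Fin n), 0 ≤ (M ^ k) i j := by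
    intro k
    induction k with
    | zero =>
      intro i j
      by_cases hij : i = j <;> simp [Matrix.one_apply, hij]
    | succ m ih =>
      intro i j
      rw [pow_succ, Matrix.mul_apply]
      exact Finset.sum_nonneg fun l _ => mul_nonneg (ih i l) (h l j)
  have h1 := exp_entry_hasSum M i j
  rw [← h1.tsum_eq]
  exact tsum_nonneg fun k => smul_nonneg (by positivity) (hp k i j)

theorem stmt11 {n : ℕ} (d : Fin n → ℝ) (hd : ∀ i, 0 < d i)
    (B₀ : Matrix (Fin n) (Fin n) ℝ)
    (hcol : ∀ j, ∑ i, B₀ i j = 0) (hoff : ∀ i j, i ≠ j → B₀ i j ≤ 0)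
    (hfix : B₀.mulVec d = 0) (x₀ : Fin n → ℝ) (t : ℝ) (ht : 0 ≤ t) :
    dMaj d ((NormedSpace.exp (-(t • B₀))).mulVec x₀) x₀ := by
  set M : Matrix (Fin n) (Fin n) ℝ := -(t • B₀) with hM
  -- diagonal entries of B₀ are nonnegative
  have hdiag : ∀ j, 0 ≤ B₀ j j := by
    intro j
    have h0 := Finset.add_sum_erase univ (fun i => B₀ i j) (mem_univ j)
    have h1 : B₀ j j + ∑ i ∈ univ.erase j, B₀ i j = 0 := by
      rw [h0]; exact hcol j
    have h2 : ∑ i ∈ univ.erase j, B₀ i j ≤ 0 :=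
      Finset.sum_nonpos fun i hi => hoff i j (Finset.ne_of_mem_erase hi)
    linarith
  refine ⟨exp M, ⟨?_, ?_⟩, ?_, rfl⟩
  · -- nonneg entries
    intro i j
    set c : ℝ := ∑ i, t * B₀ i i with hc
    have hcterm : ∀ i : Fin n, 0 ≤ t * B₀ i i := fun i => mul_nonneg ht (hdiag i)
    have hcge : ∀ i : Fin n, t * B₀ i i ≤ c :=
      fun i => Finset.single_le_sum (fun i _ => hcterm i) (mem_univ i)
    set N : Matrix (Fin n) (Fin n) ℝ := M + c • (1 : Matrix (Fin n) (Fin n) ℝ) with hN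
    have hNnn : ∀ i j, 0 ≤ N i j := by
      intro i j
      by_cases hij : i = j
      · subst hij
        have hNi : N i i = -(t * B₀ i i) + c := by
          simp [hN, hM, Matrix.one_apply_eq]
        rw [hNi]
        have := hcge i
        linarith
      · simp only [hN, hM, Matrix.add_apply, Matrix.neg_apply, Matrix.smul_apply,
          Matrix.one_apply_ne hij, smul_eq_mul, mul_zero, add_zero]
        have := hoff i j hij
        nlinarith
    have hMeq : M = N + (-c) • (1 : Matrix (Fin n) (Fin n) ℝ) := by
      simp [hN, add_assoc, ← add_smul]
    have hcomm : Commute N ((-c) • (1 : Matrix (Fin n) (Fin n) ℝ)) :=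
      (Commute.one_right N).smul_right (-c)
    have hsplit : exp M = exp N * exp ((-c) • (1 : Matrix (Fin n) (Fin n) ℝ)) := by
      rw [hMeq]
      exact Matrix.exp_add_of_commute N _ hcomm
    have hscal : exp ((-c) • (1 : Matrix (Fin n) (Fin n) ℝ))
        = Real.exp (-c) • (1 : Matrix (Fin n) (Fin n) ℝ) := by
      letI : SeminormedRing (Matrix (Fin n) (Fin n) ℝ) := Matrix.linftyOpSemiNormedRing
      letI : NormedRing (Matrix (Fin n) (Fin n) ℝ) := Matrix.linftyOpNormedRing
      letI : NormedAlgebra ℝ (Matrix (Fin n) (Fin n) ℝ) := Matrix.linftyOpNormedAlgebra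
      have h1 : ((-c) • (1 : Matrix (Fin n) (Fin n) ℝ))
          = algebraMap ℝ (Matrix (Fin n) (Fin n) ℝ) (-c) :=
        (Algebra.algebraMap_eq_smul_one (-c)).symm
      rw [h1]
      convert (algebraMap_exp_comm (𝔸 := Matrix (Fin n) (Fin n) ℝ) (-c)).symm using 1
      · rfl
      rw [Algebra.algebraMap_eq_smul_one, ← Real.exp_eq_exp_ℝ]
    have : exp M = Real.exp (-c) • exp N := by
      rw [hsplit, hscal, Matrix.mul_smul, Matrix.mul_one]
    rw [this]
    simp only [Matrix.smul_apply, smul_eq_mul]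
    exact mul_nonneg (Real.exp_nonneg _) (exp_entries_nonneg N hNnn i j)
  · -- column sums
    intro j
    have htz : Mᵀ.mulVec (fun _ => (1 : ℝ)) = 0 := by
      funext k
      simp only [Matrix.mulVec, dotProduct, Matrix.transpose_apply, mul_one,
        hM, Matrix.neg_apply, Matrix.smul_apply, smul_eq_mul, Pi.zero_apply]
      rw [Finset.sum_neg_distrib, ← Finset.mul_sum, hcol k, mul_zero, neg_zero]
    have h1 : (exp Mᵀ).mulVec (fun _ => (1 : ℝ)) = fun _ => (1 : ℝ) :=
      exp_mulVec_fixed Mᵀ _ htz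
    have h2 : exp Mᵀ = (exp M)ᵀ := Matrix.exp_transpose M
    have h3 := congrFun h1 j
    rw [h2] at h3
    simpa [Matrix.mulVec, dotProduct, Matrix.transpose_apply] using h3
  · -- fixes d
    apply exp_mulVec_fixed
    rw [hM, Matrix.neg_mulVec, Matrix.smul_mulVec, hfix]
    simp
end

section
/- The set {x ∈ ℝ^n | x ≺_d y} is a polytope: it equals the set {Ay | A column stochastic, Ad = d}, which is the image of a compact convex polytope of matrices under a linear map, hence is itself a compact convex polytope (convex hull of finitely many points). -/
open Matrix Finset

namespace Stmt14Aux

variable {n : ℕ} (d : Fin n → ℝ)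

/-- The polytope of column-stochastic matrices fixing `d`. -/
def S : Set (Matrix (Fin n) (Fin n) ℝ) := {A | ColStoch A ∧ A.mulVec d = d}

variable {d}

lemma entry_le_one {A : Matrix (Fin n) (Fin n) ℝ} (hA : ColStoch A) (i j : Fin n) :
    A i j ≤ 1 := by
  rw [← hA.2 j]
  exact Finset.single_le_sum (fun k _ => hA.1 k j) (Finset.mem_univ i)

lemma S_convex : Convex ℝ (S d) := by
  rintro A ⟨⟨hA0, hA1⟩, hAd⟩ B ⟨⟨hB0, hB1⟩, hBd⟩ a b ha hb hab
  refine ⟨⟨fun i j => ?_, fun j => ?_⟩, ?_⟩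
  · have : (a • A + b • B) i j = a * A i j + b * B i j := by
      simp [Matrix.add_apply, Matrix.smul_apply, smul_eq_mul]
    rw [this]
    exact add_nonneg (mul_nonneg ha (hA0 i j)) (mul_nonneg hb (hB0 i j))
  · have : ∀ i, (a • A + b • B) i j = a * A i j + b * B i j := fun i => by
      simp [Matrix.add_apply, Matrix.smul_apply, smul_eq_mul]
    simp_rw [this, Finset.sum_add_distrib, ← Finset.mul_sum, hA1 j, hB1 j]
    simpa using hab
  · rw [Matrix.add_mulVec, Matrix.smul_mulVec, Matrix.smul_mulVec, hAd, hBd,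
      ← add_smul, hab, one_smul]

lemma S_compact : IsCompact (S d) := by
  have hK : IsCompact ((Set.univ : Set (Fin n)).pi fun _ =>
      (Set.univ : Set (Fin n)).pi fun _ => Set.Icc (0 : ℝ) 1 :
      Set (Matrix (Fin n) (Fin n) ℝ)) := by
    apply isCompact_univ_pi
    intro i
    exact isCompact_univ_pi fun j => isCompact_Icc
  apply hK.of_isClosed_subset
  · have h1 : IsClosed {A : Matrix (Fin n) (Fin n) ℝ | ∀ i j, 0 ≤ A i j} := by
      have : {A : Matrix (Fin n) (Fin n) ℝ | ∀ i j, 0 ≤ A i j} =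
          ⋂ i, ⋂ j, {A : Matrix (Fin n) (Fin n) ℝ | 0 ≤ A i j} := by
        ext A; simp
      rw [this]
      refine isClosed_iInter fun i => isClosed_iInter fun j => ?_
      exact isClosed_le continuous_const ((continuous_apply j).comp (continuous_apply i))
    have h2 : IsClosed {A : Matrix (Fin n) (Fin n) ℝ | ∀ j, ∑ i, A i j = 1} := by
      have : {A : Matrix (Fin n) (Fin n) ℝ | ∀ j, ∑ i, A i j = 1} =
          ⋂ j, {A : Matrix (Fin n) (Fin n) ℝ | ∑ i, A i j = 1} := by
        ext A; simp
      rw [this]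
      refine isClosed_iInter fun j => isClosed_eq ?_ continuous_const
      exact continuous_finset_sum _ fun i _ =>
        (continuous_apply j).comp (continuous_apply i)
    have h3 : IsClosed {A : Matrix (Fin n) (Fin n) ℝ | A.mulVec d = d} := by
      have : {A : Matrix (Fin n) (Fin n) ℝ | A.mulVec d = d} =
          ⋂ i, {A : Matrix (Fin n) (Fin n) ℝ | ∑ j, A i j * d j = d i} := by
        ext A
        simp only [Set.mem_iInter, Set.mem_setOf_eq, funext_iff]
        rfl
      rw [this]
      refine isClosed_iInter fun i => isClosed_eq ?_ continuous_const
      exact continuous_finset_sum _ fun j _ =>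
        (((continuous_apply j).comp (continuous_apply i) :
          Continuous fun A : Matrix (Fin n) (Fin n) ℝ => A i j).mul continuous_const)
    have : S d = ({A : Matrix (Fin n) (Fin n) ℝ | ∀ i j, 0 ≤ A i j} ∩
        {A | ∀ j, ∑ i, A i j = 1}) ∩ {A | A.mulVec d = d} := by
      ext A
      simp only [S, ColStoch, Set.mem_inter_iff, Set.mem_setOf_eq]
    rw [this]
    exact ((h1.inter h2).inter h3)
  · rintro A ⟨⟨hA0, hA1⟩, -⟩
    intro i _
    intro j _
    exact ⟨hA0 i j, entry_le_one ⟨hA0, hA1⟩ i j⟩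

lemma ext_same_support {v w : Matrix (Fin n) (Fin n) ℝ}
    (hv : v ∈ (S d).extremePoints ℝ) (hw : w ∈ S d)
    (hsupp : ∀ i j, v i j = 0 ↔ w i j = 0) : w = v := by
  obtain ⟨hvS, hvext⟩ := hv
  by_cases hne : (Finset.univ.filter fun p : Fin n × Fin n => v p.1 p.2 ≠ 0).Nonempty
  swap
  · -- v is the zero matrix, hence so is w
    rw [Finset.not_nonempty_iff_eq_empty, Finset.filter_eq_empty_iff] at hne
    ext i j
    have h1 : v i j = 0 := by
      by_contra h
      exact (hne (Finset.mem_univ (i, j))) h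
    have h2 : w i j = 0 := (hsupp i j).1 h1
    rw [h1, h2]
  · set t := Finset.univ.filter fun p : Fin n × Fin n => v p.1 p.2 ≠ 0 with ht
    set ε := t.inf' hne fun p => v p.1 p.2 with hε
    have hεpos : 0 < ε := by
      rw [hε, Finset.lt_inf'_iff]
      rintro ⟨i, j⟩ hb
      rw [ht, Finset.mem_filter] at hb
      exact lt_of_le_of_ne (hvS.1.1 i j) (Ne.symm hb.2)
    have hεle : ∀ i j, v i j ≠ 0 → ε ≤ v i j := by
      intro i j h
      have hm : (i, j) ∈ t := by
        rw [ht, Finset.mem_filter]; exact ⟨Finset.mem_univ _, h⟩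
      exact Finset.inf'_le (fun p => v p.1 p.2) hm
    -- the point u = v + ε (v - w) lies in S
    set u := v + ε • (v - w) with hu
    have huS : u ∈ S d := by
      refine ⟨⟨fun i j => ?_, fun j => ?_⟩, ?_⟩
      · have huij : u i j = v i j + ε * (v i j - w i j) := by
          simp [hu, Matrix.add_apply, Matrix.smul_apply, Matrix.sub_apply, smul_eq_mul]
        rw [huij]
        by_cases h : v i j = 0
        · rw [h, (hsupp i j).1 h]; simp
        · have h1 : ε ≤ v i j := hεle i j h
          have h2 : w i j ≤ 1 := entry_le_one hw.1 i j
          have h3 : 0 ≤ w i j := hw.1.1 i j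
          have h4 : 0 ≤ v i j := hvS.1.1 i j
          nlinarith [mul_le_mul_of_nonneg_left h2 hεpos.le]
      · have : ∀ i, u i j = v i j + ε * (v i j - w i j) := fun i => by
          simp [hu, Matrix.add_apply, Matrix.smul_apply, Matrix.sub_apply, smul_eq_mul]
        simp_rw [this, Finset.sum_add_distrib, ← Finset.mul_sum, Finset.sum_sub_distrib,
          hvS.1.2 j, hw.1.2 j]
        ring
      · rw [hu, Matrix.add_mulVec, Matrix.smul_mulVec, Matrix.sub_mulVec,
          hvS.2, hw.2]
        simp
    -- v lies strictly between u and w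
    have hcomb : ((1 + ε)⁻¹ : ℝ) • u + (ε * (1 + ε)⁻¹) • w = v := by
      have h1ε : (1 + ε : ℝ) ≠ 0 := by positivity
      rw [hu]
      rw [smul_add, smul_smul, smul_sub]
      have e1 : ((1 + ε)⁻¹ : ℝ) • v + (((1 + ε)⁻¹ * ε) • v - ((1 + ε)⁻¹ * ε) • w)
          + (ε * (1 + ε)⁻¹) • w
          = (((1 + ε)⁻¹ : ℝ) + (1 + ε)⁻¹ * ε) • v
            + ((ε * (1 + ε)⁻¹) - ((1 + ε)⁻¹ * ε)) • w := by
        rw [add_smul, sub_smul]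
        abel
      rw [e1]
      have e2 : ((1 + ε)⁻¹ : ℝ) + (1 + ε)⁻¹ * ε = 1 := by field_simp
      have e3 : ((ε * (1 + ε)⁻¹) - ((1 + ε)⁻¹ * ε) : ℝ) = 0 := by ring
      rw [e2, e3, one_smul, zero_smul, add_zero]
    have hvopen : v ∈ openSegment ℝ u w := by
      refine ⟨(1 + ε)⁻¹, ε * (1 + ε)⁻¹, by positivity, by positivity, ?_, hcomb⟩
      field_simp
    exact hvext hw huS (by rw [openSegment_symm]; exact hvopen)

lemma extremePoints_finite : ((S d).extremePoints ℝ).Finite := by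
  apply Set.Finite.of_finite_image
    (f := fun A : Matrix (Fin n) (Fin n) ℝ => {p : Fin n × Fin n | A p.1 p.2 = 0})
  · exact Set.toFinite _
  · intro v hv w hw h
    have hsupp : ∀ i j, v i j = 0 ↔ w i j = 0 := by
      intro i j
      have := Set.ext_iff.1 h (i, j)
      simpa using this
    exact (ext_same_support hv hw.1 hsupp).symm

instance : LocallyConvexSpace ℝ (Matrix (Fin n) (Fin n) ℝ) :=
  inferInstanceAs (LocallyConvexSpace ℝ (Fin n → Fin n → ℝ))

lemma S_eq_hull : S d = convexHull ℝ ((S d).extremePoints ℝ) := by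
  have h1 := closure_convexHull_extremePoints (S_compact (d := d)) S_convex
  have h2 : IsClosed (convexHull ℝ ((S d).extremePoints ℝ)) :=
    ((extremePoints_finite).isCompact_convexHull ℝ).isClosed
  exact h1.symm.trans h2.closure_eq

/-- The linear map `A ↦ A.mulVec y`. -/
def L (y : Fin n → ℝ) : Matrix (Fin n) (Fin n) ℝ →ₗ[ℝ] (Fin n → ℝ) where
  toFun A := A.mulVec y
  map_add' A B := Matrix.add_mulVec A B y
  map_smul' a A := Matrix.smul_mulVec a A y

lemma image_eq (y : Fin n → ℝ) : {x : Fin n → ℝ | dMaj d x y} = L y '' S d := by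
  ext x
  simp only [dMaj, Set.mem_image, Set.mem_setOf_eq, S, L, LinearMap.coe_mk, AddHom.coe_mk]
  constructor
  · rintro ⟨A, h1, h2, h3⟩; exact ⟨A, ⟨h1, h2⟩, h3⟩
  · rintro ⟨A, ⟨h1, h2⟩, h3⟩; exact ⟨A, h1, h2, h3⟩

end Stmt14Aux

open Stmt14Aux in
theorem stmt14 {n : ℕ} (d y : Fin n → ℝ) (hd : ∀ i, 0 < d i) :
    {x : Fin n → ℝ | dMaj d x y} =
        {x | ∃ A : Matrix (Fin n) (Fin n) ℝ, ColStoch A ∧ A.mulVec d = d ∧ x = A.mulVec y} ∧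
      IsCompact {x : Fin n → ℝ | dMaj d x y} ∧
      Convex ℝ {x : Fin n → ℝ | dMaj d x y} ∧
      ∃ s : Finset (Fin n → ℝ),
        {x : Fin n → ℝ | dMaj d x y} = convexHull ℝ (s : Set (Fin n → ℝ)) := by
  refine ⟨?_, ?_, ?_, ?_⟩
  · ext x
    simp only [dMaj, Set.mem_setOf_eq]
    constructor
    · rintro ⟨A, h1, h2, h3⟩; exact ⟨A, h1, h2, h3.symm⟩
    · rintro ⟨A, h1, h2, h3⟩; exact ⟨A, h1, h2, h3.symm⟩
  · rw [image_eq]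
    exact (S_compact).image (L y).continuous_of_finiteDimensional
  · rw [image_eq]
    exact (S_convex).linear_image (L y)
  · refine ⟨(extremePoints_finite (d := d)).toFinset.image (fun A => A.mulVec y), ?_⟩
    have h : ⇑(L y) '' S d = convexHull ℝ (⇑(L y) '' ((S d).extremePoints ℝ)) := by
      conv_lhs => rw [S_eq_hull (d := d)]
      exact (L y).image_convexHull _
    rw [image_eq (d := d) y, h]
    refine congrArg _ ?_
    rw [Finset.coe_image, Set.Finite.coe_toFinset]
    rfl
end
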